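/- Let μ ∈ ℝ and σ > 0. For every α ∈ (0,1) there exists a Borel probability measure Q on ℝ with mean exactly μ and variance exactly σ² such that Q({x ∈ ℝ : (1 + ((x−μ)₊)²/σ²)^{-1} ≤ α}) = α; concretely, the two-point measure giving mass α to the point μ + σ√((1−α)/α) and mass 1−α to the point μ − σ√(α/(1−α)) has these properties. Consequently sup_{Q∈H(μ,σ)} Q({x : (1 + ((x−μ)₊)²/σ²)^{-1} ≤ α}) = α, i.e. P₀ is a precise p-variable for H(μ,σ). -/

import Mathlib

open MeasureTheory Set
open scoped ENNReal

/-- Mean of a distribution on ℝ. -/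
noncomputable def distMean (Q : Measure ℝ) : ℝ := ∫ x, x ∂Q

/-- Variance of a distribution on ℝ. -/
noncomputable def distVar (Q : Measure ℝ) : ℝ := ∫ x, (x - distMean Q)^2 ∂Q

/-- `H(μ,σ)`: Borel probability measures on ℝ with finite second moment,
mean at most `μ`, and variance at most `σ²`. -/
def MemH (μ σ : ℝ) (Q : Measure ℝ) : Prop :=
  IsProbabilityMeasure Q ∧ Integrable (fun x => x^2) Q ∧
    distMean Q ≤ μ ∧ distVar Q ≤ σ^2

/-- The two-point measure giving mass `α` to `μ + σ√((1−α)/α)` and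
mass `1−α` to `μ − σ√(α/(1−α))`. -/
noncomputable def twoPointQ (μ σ α : ℝ) : Measure ℝ :=
  ENNReal.ofReal α • Measure.dirac (μ + σ * Real.sqrt ((1 - α) / α)) +
    ENNReal.ofReal (1 - α) • Measure.dirac (μ - σ * Real.sqrt (α / (1 - α)))

lemma myIntegrableDirac {f : ℝ → ℝ} (hf : Measurable f) (a : ℝ) :
    Integrable f (Measure.dirac a) := by
  refine ⟨hf.aestronglyMeasurable, ?_⟩
  rw [HasFiniteIntegral, lintegral_dirac' _ (by measurability)]
  exact ENNReal.coe_lt_top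

lemma myIntegrableTwoPt {f : ℝ → ℝ} (hf : Measurable f) (a b : ℝ) (c d : ℝ) :
    Integrable f (ENNReal.ofReal c • Measure.dirac a + ENNReal.ofReal d • Measure.dirac b) :=
  ((myIntegrableDirac hf a).smul_measure ENNReal.ofReal_ne_top).add_measure
    ((myIntegrableDirac hf b).smul_measure ENNReal.ofReal_ne_top)

lemma myIntegralTwoPt {f : ℝ → ℝ} (hf : Measurable f) (a b : ℝ) {c d : ℝ}
    (hc : 0 ≤ c) (hd : 0 ≤ d) :
    ∫ x, f x ∂(ENNReal.ofReal c • Measure.dirac a + ENNReal.ofReal d • Measure.dirac b)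
      = c * f a + d * f b := by
  rw [integral_add_measure ((myIntegrableDirac hf a).smul_measure ENNReal.ofReal_ne_top)
    ((myIntegrableDirac hf b).smul_measure ENNReal.ofReal_ne_top),
    integral_smul_measure, integral_smul_measure, integral_dirac, integral_dirac]
  simp [ENNReal.toReal_ofReal hc, ENNReal.toReal_ofReal hd]

/-- The p-value set is the right tail. -/
lemma mySetEq (μ σ : ℝ) (hσ : 0 < σ) (α : ℝ) (hα : α ∈ Ioo (0:ℝ) 1) :
    {x : ℝ | (1 + (max (x - μ) 0)^2 / σ^2)⁻¹ ≤ α}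
      = Ici (μ + σ * Real.sqrt ((1 - α) / α)) := by
  obtain ⟨hα0, hα1⟩ := hα
  have hβ : 0 < 1 - α := by linarith
  set s : ℝ := σ * Real.sqrt ((1 - α) / α) with hs_def
  have hs : 0 < s := mul_pos hσ (Real.sqrt_pos.mpr (div_pos hβ hα0))
  have hs2 : s^2 = σ^2 * ((1 - α) / α) := by
    rw [hs_def, mul_pow, Real.sq_sqrt (div_pos hβ hα0).le]
  ext x
  simp only [mem_setOf_eq, mem_Ici]
  set t : ℝ := max (x - μ) 0 with ht_def
  have ht : 0 ≤ t := le_max_right _ _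
  have hpos : 0 < 1 + t^2 / σ^2 := by positivity
  constructor
  · intro h
    have h1 : α⁻¹ ≤ 1 + t^2 / σ^2 := (inv_le_comm₀ hpos hα0).mp h
    have h3 : (1 - α) / α ≤ t^2 / σ^2 := by
      have hk : α⁻¹ = 1 + (1 - α) / α := by field_simp; ring
      rw [hk] at h1; linarith
    have h2 : s^2 ≤ t^2 := by
      rw [div_le_div_iff₀ hα0 (by positivity : (0:ℝ) < σ^2)] at h3
      have he : σ^2 * ((1 - α) / α) = (σ^2 * (1 - α)) / α := by ring
      rw [hs2, he, div_le_iff₀ hα0]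
      nlinarith
    have h4 : s ≤ t := by
      have := Real.sqrt_le_sqrt h2
      rwa [Real.sqrt_sq hs.le, Real.sqrt_sq ht] at this
    rcases le_or_gt (x - μ) 0 with h0 | h0
    · exfalso
      have : t = 0 := max_eq_right h0
      linarith
    · have : t = x - μ := max_eq_left h0.le
      linarith
  · intro h
    have h4 : s ≤ t := le_trans (by linarith) (le_max_left _ _)
    have h2 : s^2 ≤ t^2 := by nlinarith
    have h1 : α⁻¹ ≤ 1 + t^2 / σ^2 := by
      have hk : α⁻¹ = 1 + (1 - α) / α := by field_simp; ring
      rw [hk]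
      have hss : α * s^2 = σ^2 * (1 - α) := by rw [hs2]; field_simp
      have : (1 - α) / α ≤ t^2 / σ^2 := by
        rw [div_le_div_iff₀ hα0 (by positivity : (0:ℝ) < σ^2)]
        nlinarith [mul_le_mul_of_nonneg_left h2 hα0.le]
      linarith
    exact (inv_le_comm₀ hpos hα0).mpr h1

/-- Cantelli-type bound. -/
lemma myCantelli (μ σ : ℝ) (hσ : 0 < σ) (α : ℝ) (hα : α ∈ Ioo (0:ℝ) 1)
    (Q : Measure ℝ) (hP : IsProbabilityMeasure Q) (hi2 : Integrable (fun x => x^2) Q)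
    (hm : distMean Q ≤ μ) (hv : distVar Q ≤ σ^2) :
    (Q {x | (1 + (max (x - μ) 0)^2 / σ^2)⁻¹ ≤ α}).toReal ≤ α := by
  obtain ⟨hα0, hα1⟩ := hα
  have hβ : 0 < 1 - α := by linarith
  set s : ℝ := σ * Real.sqrt ((1 - α) / α) with hs_def
  have hs : 0 < s := mul_pos hσ (Real.sqrt_pos.mpr (div_pos hβ hα0))
  have hs2 : s^2 = σ^2 * ((1 - α) / α) := by
    rw [hs_def, mul_pow, Real.sq_sqrt (div_pos hβ hα0).le]
  set u : ℝ := σ^2 / s with hu_def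
  have hu : 0 < u := div_pos (by positivity) hs
  -- integrability
  have hi1 : Integrable (fun x : ℝ => x) Q := by
    refine ((integrable_const (1:ℝ)).add hi2).mono'
      measurable_id.aestronglyMeasurable (ae_of_all _ fun x => ?_)
    simp only [Real.norm_eq_abs, Pi.add_apply]
    nlinarith [sq_abs x, sq_nonneg (|x| - 1), abs_nonneg x]
  have hint : ∀ c d : ℝ, Integrable (fun x => x^2 + (c * x + d)) Q := fun c d =>
    hi2.add ((hi1.const_mul c).add (integrable_const d))
  have hiq : Integrable (fun x => (x - distMean Q + u)^2) Q := by
    have he : (fun x : ℝ => (x - distMean Q + u)^2)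
        = fun x => x^2 + ((2 * (u - distMean Q)) * x + (u - distMean Q)^2) := by
      funext x; ring
    rw [he]; exact hint _ _
  have hivar : Integrable (fun x => (x - distMean Q)^2) Q := by
    have he : (fun x : ℝ => (x - distMean Q)^2)
        = fun x => x^2 + ((-2 * distMean Q) * x + (distMean Q)^2) := by
      funext x; ring
    rw [he]; exact hint _ _
  -- integral of the quadratic
  have hIq : ∫ x, (x - distMean Q + u)^2 ∂Q = distVar Q + u^2 := by
    have hIm : ∫ x, x ∂Q = distMean Q := rfl
    have e0 : ∫ x, (x - distMean Q + u)^2 ∂Q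
        = ∫ x, ((x - distMean Q)^2 + ((2*u)*x + (u^2 - 2*u*distMean Q))) ∂Q := by
      congr 1; funext x; ring
    have e1 : ∫ x, ((x - distMean Q)^2 + ((2*u)*x + (u^2 - 2*u*distMean Q))) ∂Q
        = (∫ x, (x - distMean Q)^2 ∂Q) + ∫ x, ((2*u)*x + (u^2 - 2*u*distMean Q)) ∂Q :=
      integral_add hivar ((hi1.const_mul _).add (integrable_const _))
    have e2 : ∫ x, ((2*u)*x + (u^2 - 2*u*distMean Q)) ∂Q
        = (∫ x, (2*u)*x ∂Q) + ∫ _x : ℝ, (u^2 - 2*u*distMean Q) ∂Q :=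
      integral_add (hi1.const_mul _) (integrable_const _)
    have e3 : ∫ x, (2*u)*x ∂Q = (2*u) * distMean Q := by
      rw [integral_const_mul, hIm]
    have e4 : ∫ _x : ℝ, (u^2 - 2*u*distMean Q) ∂Q = u^2 - 2*u*distMean Q := by
      rw [integral_const]; simp
    have e5 : ∫ x, (x - distMean Q)^2 ∂Q = distVar Q := rfl
    rw [e0, e1, e2, e3, e4, e5]; ring
  -- Markov
  have hmarkov := mul_meas_ge_le_integral_of_nonneg (μ := Q)
    (f := fun x => (x - distMean Q + u)^2) (ae_of_all _ fun x => sq_nonneg _) hiq ((s + u)^2)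
  rw [hIq] at hmarkov
  -- subset
  have hsub : {x : ℝ | (1 + (max (x - μ) 0)^2 / σ^2)⁻¹ ≤ α}
      ⊆ {x | (s + u)^2 ≤ (fun x => (x - distMean Q + u)^2) x} := by
    rw [mySetEq μ σ hσ α ⟨hα0, hα1⟩]
    intro x hx
    have hx' : μ + s ≤ x := mem_Ici.mp hx
    have h1 : s + u ≤ x - distMean Q + u := by linarith
    exact pow_le_pow_left₀ (by linarith) h1 2
  have hQS : (Q {x | (1 + (max (x - μ) 0)^2 / σ^2)⁻¹ ≤ α}).toReal
      ≤ (Q {x | (s + u)^2 ≤ (fun x => (x - distMean Q + u)^2) x}).toReal :=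
    ENNReal.toReal_mono (measure_ne_top Q _) (measure_mono hsub)
  have hε : (0:ℝ) < (s + u)^2 := by positivity
  have h5 : (s + u)^2 * (Q {x | (1 + (max (x - μ) 0)^2 / σ^2)⁻¹ ≤ α}).toReal
      ≤ σ^2 + u^2 := by
    have := mul_le_mul_of_nonneg_left hQS hε.le
    simp only [Measure.real] at hmarkov
    linarith
  -- key identity
  have hkey : α * s^2 = σ^2 * (1 - α) := by
    rw [hs2]; field_simp
  have hid : (s + u)^2 * α = σ^2 + u^2 := by
    have hus : u * s = σ^2 := by rw [hu_def]; field_simp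
    have hu2 : u^2 * s^2 = σ^2 * σ^2 := by rw [← mul_pow, hus]; ring
    have hs2ne : s^2 ≠ 0 := by positivity
    have hmain : ((s + u)^2 * α) * s^2 = (σ^2 + u^2) * s^2 := by
      linear_combination (s^2 + σ^2) * hkey + 2 * α * s^2 * hus + (α - 1) * hu2
    exact mul_right_cancel₀ hs2ne hmain
  calc (Q {x | (1 + (max (x - μ) 0)^2 / σ^2)⁻¹ ≤ α}).toReal
      ≤ (σ^2 + u^2) / (s + u)^2 := by
        rw [le_div_iff₀ hε]; linarith
    _ = α := by rw [← hid]; exact mul_div_cancel_left₀ α hε.ne'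

theorem stmt_4 (μ σ : ℝ) (hσ : 0 < σ) (α : ℝ) (hα : α ∈ Ioo (0:ℝ) 1) :
    (IsProbabilityMeasure (twoPointQ μ σ α) ∧
      Integrable (fun x => x^2) (twoPointQ μ σ α) ∧
      distMean (twoPointQ μ σ α) = μ ∧
      distVar (twoPointQ μ σ α) = σ^2 ∧
      ((twoPointQ μ σ α) {x | (1 + (max (x - μ) 0)^2 / σ^2)⁻¹ ≤ α}).toReal = α) ∧
    IsLUB {r : ℝ | ∃ Q : Measure ℝ, MemH μ σ Q ∧
      r = (Q {x | (1 + (max (x - μ) 0)^2 / σ^2)⁻¹ ≤ α}).toReal} α := by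
  obtain ⟨hα0, hα1⟩ := hα
  have hβ : 0 < 1 - α := by linarith
  set a : ℝ := μ + σ * Real.sqrt ((1 - α) / α) with ha_def
  set b : ℝ := μ - σ * Real.sqrt (α / (1 - α)) with hb_def
  have hs1 : 0 < Real.sqrt ((1 - α) / α) := Real.sqrt_pos.mpr (div_pos hβ hα0)
  have hs2 : 0 < Real.sqrt (α / (1 - α)) := Real.sqrt_pos.mpr (div_pos hα0 hβ)
  have hs1sq : (Real.sqrt ((1 - α) / α))^2 = (1 - α) / α := Real.sq_sqrt (div_pos hβ hα0).le
  have hs2sq : (Real.sqrt (α / (1 - α)))^2 = α / (1 - α) := Real.sq_sqrt (div_pos hα0 hβ).le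
  -- balance of the two points
  have hbal : α * Real.sqrt ((1 - α) / α) = (1 - α) * Real.sqrt (α / (1 - α)) := by
    have h1 : α * Real.sqrt ((1 - α) / α) = Real.sqrt (α^2 * ((1 - α) / α)) := by
      rw [Real.sqrt_mul (sq_nonneg α), Real.sqrt_sq hα0.le]
    have h2 : (1 - α) * Real.sqrt (α / (1 - α)) = Real.sqrt ((1 - α)^2 * (α / (1 - α))) := by
      rw [Real.sqrt_mul (sq_nonneg (1 - α)), Real.sqrt_sq hβ.le]
    rw [h1, h2]
    congr 1
    field_simp
  have htp : twoPointQ μ σ α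
      = ENNReal.ofReal α • Measure.dirac a + ENNReal.ofReal (1 - α) • Measure.dirac b := rfl
  -- probability measure
  have hprob : IsProbabilityMeasure (twoPointQ μ σ α) := by
    constructor
    rw [htp, Measure.add_apply, Measure.smul_apply, Measure.smul_apply,
      Measure.dirac_apply, Measure.dirac_apply]
    simp only [mem_univ, indicator_of_mem, Pi.one_apply, smul_eq_mul, mul_one]
    rw [← ENNReal.ofReal_add hα0.le hβ.le]
    norm_num
  -- integrability of x²
  have hint2 : Integrable (fun x => x^2) (twoPointQ μ σ α) := by
    rw [htp]; exact myIntegrableTwoPt (by measurability) a b α (1 - α)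
  -- mean
  have hmean : distMean (twoPointQ μ σ α) = μ := by
    rw [distMean, htp, myIntegralTwoPt (f := fun x => x) measurable_id' a b hα0.le hβ.le]
    rw [ha_def, hb_def]
    linear_combination σ * hbal
  -- variance
  have hvar : distVar (twoPointQ μ σ α) = σ^2 := by
    rw [distVar, hmean, htp, myIntegralTwoPt (by measurability) a b hα0.le hβ.le]
    have h1 : (a - μ)^2 = σ^2 * ((1 - α) / α) := by
      have e : (μ + σ * Real.sqrt ((1 - α) / α) - μ)^2
          = (σ * Real.sqrt ((1 - α) / α))^2 := by ring
      rw [ha_def, e, mul_pow, hs1sq]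
    have h2 : (b - μ)^2 = σ^2 * (α / (1 - α)) := by
      have e : (μ - σ * Real.sqrt (α / (1 - α)) - μ)^2
          = (σ * Real.sqrt (α / (1 - α)))^2 := by ring
      rw [hb_def, e, mul_pow, hs2sq]
    rw [h1, h2]
    field_simp
    ring
  -- the set mass
  have hSeq := mySetEq μ σ hσ α ⟨hα0, hα1⟩
  have hmass : ((twoPointQ μ σ α) {x | (1 + (max (x - μ) 0)^2 / σ^2)⁻¹ ≤ α}).toReal = α := by
    rw [hSeq, htp, Measure.add_apply, Measure.smul_apply, Measure.smul_apply,
      Measure.dirac_apply, Measure.dirac_apply]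
    have hain : a ∈ Ici (μ + σ * Real.sqrt ((1 - α) / α)) := mem_Ici.mpr (le_of_eq ha_def.symm)
    have hbnot : b ∉ Ici (μ + σ * Real.sqrt ((1 - α) / α)) := by
      simp only [mem_Ici, not_le, hb_def]
      nlinarith [mul_pos hσ hs1, mul_pos hσ hs2]
    rw [indicator_of_mem hain, indicator_of_notMem hbnot]
    simp [ENNReal.toReal_ofReal hα0.le]
  refine ⟨⟨hprob, hint2, hmean, hvar, hmass⟩, ?_, ?_⟩
  · rintro r ⟨Q, ⟨hQp, hQ2, hQm, hQv⟩, rfl⟩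
    exact myCantelli μ σ hσ α ⟨hα0, hα1⟩ Q hQp hQ2 hQm hQv
  · intro c hc
    exact hc ⟨twoPointQ μ σ α, ⟨hprob, hint2, hmean.le, hvar.le⟩, hmass.symm⟩
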